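/- There is a bijection between partitions of n with exactly r ≥ 1 even parts and s odd parts, with no two parts equal or consecutive, no two even parts equal or consecutive, smallest odd part ≥ 3, and smallest even part equal to 2, and partitions of n−4(r+s)+2 with exactly r−1 even parts and s odd parts satisfying the same difference conditions with all parts ≥ 1; the bijection removes the part 2 and subtracts 4 from every remaining part. -/

import Mathlib

/-- Odd parts are pairwise distinct. -/
def distinctOddParts (m : Multiset ℕ) : Prop := ∀ a, Odd a → m.count a ≤ 1

/-- Every even part is at least `k` (vacuous if no even part). -/
def minEvenGe (m : Multiset ℕ) (k : ℕ) : Prop := ∀ a ∈ m, Even a → k ≤ a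

/-- Every odd part is at least `k` (vacuous if no odd part). -/
def minOddGe (m : Multiset ℕ) (k : ℕ) : Prop := ∀ a ∈ m, Odd a → k ≤ a

/-- No two parts are equal or consecutive, and no two even parts are equal or
consecutive even numbers: parts pairwise differ by at least 2, even parts by at least 4. -/
def gapCond (m : Multiset ℕ) : Prop :=
  (∀ a, m.count a ≤ 1) ∧ (∀ a ∈ m, ∀ b ∈ m, a < b → a + 2 ≤ b) ∧
  (∀ a ∈ m, ∀ b ∈ m, Even a → Even b → a < b → a + 4 ≤ b)

/-- Number of even parts. -/
def evenCount (m : Multiset ℕ) : ℕ := (m.filter (fun a => Even a)).card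

/-- Number of odd parts. -/
def oddCount (m : Multiset ℕ) : ℕ := (m.filter (fun a => Odd a)).card

open Multiset

lemma aux_card_eq (t : Multiset ℕ) : t.card = evenCount t + oddCount t := by
  have h1 := filter_add_not (fun a : ℕ => Even a) t
  have h2 : t.filter (fun a => ¬ Even a) = t.filter (fun a => Odd a) :=
    filter_congr (fun x _ => by simp [Nat.not_even_iff_odd])
  unfold evenCount oddCount
  rw [← h2, ← card_add, h1]

lemma aux_sum_map_sub4 (t : Multiset ℕ) (h : ∀ a ∈ t, 4 ≤ a) :
    (t.map (· - 4)).sum + 4 * t.card = t.sum := by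
  induction t using Multiset.induction_on with
  | empty => simp
  | cons a t ih =>
    have ha := h a (mem_cons_self a t)
    have h2 := ih (fun b hb => h b (mem_cons_of_mem hb))
    simp only [map_cons, sum_cons, card_cons]
    omega

lemma aux_sum_map_add4 (t : Multiset ℕ) :
    (t.map (· + 4)).sum = t.sum + 4 * t.card := by
  induction t using Multiset.induction_on with
  | empty => simp
  | cons a t ih =>
    simp only [map_cons, sum_cons, card_cons, ih]
    ring

lemma aux_even_map_sub4 (t : Multiset ℕ) (h : ∀ a ∈ t, 4 ≤ a) :
    evenCount (t.map (· - 4)) = evenCount t := by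
  unfold evenCount
  rw [filter_map, card_map]
  congr 1
  refine filter_congr (fun x hx => ?_)
  have := h x hx
  simp only [Function.comp]
  rw [Nat.even_iff, Nat.even_iff]
  omega

lemma aux_odd_map_sub4 (t : Multiset ℕ) (h : ∀ a ∈ t, 4 ≤ a) :
    oddCount (t.map (· - 4)) = oddCount t := by
  unfold oddCount
  rw [filter_map, card_map]
  congr 1
  refine filter_congr (fun x hx => ?_)
  have := h x hx
  simp only [Function.comp]
  rw [Nat.odd_iff, Nat.odd_iff]
  omega

lemma aux_even_map_add4 (t : Multiset ℕ) :
    evenCount (t.map (· + 4)) = evenCount t := by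
  unfold evenCount
  rw [filter_map, card_map]
  congr 1
  refine filter_congr (fun x _ => ?_)
  simp only [Function.comp]
  rw [Nat.even_iff, Nat.even_iff]
  omega

lemma aux_odd_map_add4 (t : Multiset ℕ) :
    oddCount (t.map (· + 4)) = oddCount t := by
  unfold oddCount
  rw [filter_map, card_map]
  congr 1
  refine filter_congr (fun x _ => ?_)
  simp only [Function.comp]
  rw [Nat.odd_iff, Nat.odd_iff]
  omega

lemma aux_gap_mono {t p : Multiset ℕ} (hle : t ≤ p) (hg : gapCond p) : gapCond t :=
  ⟨fun a => le_trans (count_le_of_le a hle) (hg.1 a),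
   fun a ha b hb => hg.2.1 a (mem_of_le hle ha) b (mem_of_le hle hb),
   fun a ha b hb => hg.2.2 a (mem_of_le hle ha) b (mem_of_le hle hb)⟩

lemma aux_gap_sub4 (t : Multiset ℕ) (h : ∀ a ∈ t, 4 ≤ a) (hg : gapCond t) :
    gapCond (t.map (· - 4)) := by
  refine ⟨?_, ?_, ?_⟩
  · rw [← nodup_iff_count_le_one]
    exact Nodup.map_on
      (fun x hx y hy hxy => by have := h x hx; have := h y hy; omega)
      (nodup_iff_count_le_one.2 hg.1)
  · rintro a ha b hb hab
    obtain ⟨a', ha', rfl⟩ := mem_map.1 ha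
    obtain ⟨b', hb', rfl⟩ := mem_map.1 hb
    have h1 := h a' ha'; have h2 := h b' hb'
    have := hg.2.1 a' ha' b' hb' (by omega)
    omega
  · rintro a ha b hb hea heb hab
    obtain ⟨a', ha', rfl⟩ := mem_map.1 ha
    obtain ⟨b', hb', rfl⟩ := mem_map.1 hb
    have h1 := h a' ha'; have h2 := h b' hb'
    have hea' : Even a' := by rw [Nat.even_iff]; rw [Nat.even_iff] at hea; omega
    have heb' : Even b' := by rw [Nat.even_iff]; rw [Nat.even_iff] at heb; omega
    have := hg.2.2 a' ha' b' hb' hea' heb' (by omega)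
    omega

lemma aux_erase_ge (p : Multiset ℕ) (hgap : gapCond p)
    (hodd : minOddGe p 3) (h2 : (2:ℕ) ∈ p) :
    ∀ a ∈ p.erase 2, 5 ≤ a ∧ (Even a → 6 ≤ a) := by
  intro a ha
  have hamem : a ∈ p := mem_of_mem_erase ha
  have hane : a ≠ 2 := by
    rintro rfl
    have hc := hgap.1 2
    have hpos := count_pos.2 ha
    rw [count_erase_self] at hpos
    omega
  have h5 : 5 ≤ a := by
    rcases Nat.even_or_odd a with he | ho
    · rcases lt_or_gt_of_ne hane with h | h
      · have h0 : a = 0 ∨ a = 1 := by omega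
        rcases h0 with rfl | rfl
        · have := hgap.2.2 0 hamem 2 h2 (by norm_num) (by norm_num) (by norm_num)
          omega
        · exact absurd he (by norm_num)
      · have h4 := hgap.2.2 2 h2 a hamem (by norm_num) he h
        omega
    · have h3 := hodd a hamem ho
      rcases lt_or_gt_of_ne hane with h | h
      · omega
      · have := hgap.2.1 2 h2 a hamem h
        rcases ho with ⟨k, hk⟩
        omega
  refine ⟨h5, fun he => ?_⟩
  have := hgap.2.2 2 h2 a hamem (by norm_num) he (by omega)
  omega

theorem bijection_remove_two (r s n : ℕ) (hr : 1 ≤ r) (m : ℕ)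
    (hm : (m : ℤ) = (n : ℤ) - 4 * ((r : ℤ) + s) + 2) :
    ∃ e : {p : n.Partition // evenCount p.parts = r ∧ oddCount p.parts = s ∧
            gapCond p.parts ∧ minOddGe p.parts 3 ∧ (2 : ℕ) ∈ p.parts} ≃
          {q : m.Partition // evenCount q.parts = r - 1 ∧ oddCount q.parts = s ∧
            gapCond q.parts ∧ (∀ a ∈ q.parts, 1 ≤ a)},
      ∀ p, (e p).1.parts = (p.1.parts.erase 2).map (· - 4) := by
  classical
  -- forward construction
  have Fall : ∀ p : {p : n.Partition // evenCount p.parts = r ∧ oddCount p.parts = s ∧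
      gapCond p.parts ∧ minOddGe p.parts 3 ∧ (2 : ℕ) ∈ p.parts},
      ∃ q : m.Partition, q.parts = (p.1.parts.erase 2).map (· - 4) ∧
        (evenCount q.parts = r - 1 ∧ oddCount q.parts = s ∧
        gapCond q.parts ∧ (∀ a ∈ q.parts, 1 ≤ a)) := by
    rintro ⟨p, he, ho, hgap, hmo, h2⟩
    set t := p.parts.erase 2 with ht
    have key := aux_erase_ge p.parts hgap hmo h2
    have key4 : ∀ a ∈ t, 4 ≤ a := fun a ha => by have := key a ha; omega
    have hcons : (2:ℕ) ::ₘ t = p.parts := cons_erase h2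
    have hcard : p.parts.card = r + s := by rw [aux_card_eq, he, ho]
    have htcard : t.card = r + s - 1 := by
      have := congrArg Multiset.card hcons
      rw [card_cons] at this; omega
    have hsum : (t.map (· - 4)).sum = m := by
      have h1 := aux_sum_map_sub4 t key4
      have h2' : 2 + t.sum = n := by
        have := congrArg Multiset.sum hcons
        rwa [sum_cons, p.parts_sum] at this
      omega
    refine ⟨⟨t.map (· - 4), ?_, hsum⟩, rfl, ?_, ?_, ?_, ?_⟩
    · intro a ha
      obtain ⟨b, hb, rfl⟩ := mem_map.1 ha
      have := key b hb; omega
    · show evenCount (t.map (· - 4)) = r - 1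
      rw [aux_even_map_sub4 t key4]
      have : evenCount p.parts = evenCount t + 1 := by
        rw [← hcons]; unfold evenCount
        rw [filter_cons_of_pos _ (by norm_num), card_cons]
      omega
    · show oddCount (t.map (· - 4)) = s
      rw [aux_odd_map_sub4 t key4]
      have : oddCount p.parts = oddCount t := by
        rw [← hcons]; unfold oddCount
        rw [filter_cons_of_neg _ (by norm_num)]
      omega
    · exact aux_gap_sub4 t key4 (aux_gap_mono (erase_le 2 p.parts) hgap)
    · intro a ha
      obtain ⟨b, hb, rfl⟩ := mem_map.1 ha
      have := key b hb; omega
  -- backward construction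
  have Gall : ∀ q : {q : m.Partition // evenCount q.parts = r - 1 ∧ oddCount q.parts = s ∧
      gapCond q.parts ∧ (∀ a ∈ q.parts, 1 ≤ a)},
      ∃ p : n.Partition, p.parts = 2 ::ₘ q.1.parts.map (· + 4) ∧
        (evenCount p.parts = r ∧ oddCount p.parts = s ∧
        gapCond p.parts ∧ minOddGe p.parts 3 ∧ (2 : ℕ) ∈ p.parts) := by
    rintro ⟨q, he, ho, hgap, hpos⟩
    have hqcard : q.parts.card = r - 1 + s := by rw [aux_card_eq, he, ho]
    have hmem5 : ∀ a ∈ q.parts.map (· + 4), 5 ≤ a ∧ (Even a → 6 ≤ a) := by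
      intro a ha
      obtain ⟨b, hb, rfl⟩ := mem_map.1 ha
      have h1 := hpos b hb
      constructor
      · omega
      · intro heb
        have : Even b := by rw [Nat.even_iff] at heb ⊢; omega
        rcases this with ⟨k, hk⟩
        omega
    have hsum : (2 ::ₘ q.parts.map (· + 4)).sum = n := by
      rw [sum_cons, aux_sum_map_add4, q.parts_sum, hqcard]
      omega
    refine ⟨⟨2 ::ₘ q.parts.map (· + 4), ?_, hsum⟩, rfl, ?_, ?_, ?_, ?_, mem_cons_self _ _⟩
    · intro a ha
      rcases mem_cons.1 ha with rfl | ha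
      · norm_num
      · have := hmem5 a ha; omega
    · unfold evenCount
      rw [filter_cons_of_pos _ (by norm_num), card_cons]
      have := aux_even_map_add4 q.parts
      unfold evenCount at this
      rw [this]
      unfold evenCount at he
      omega
    · unfold oddCount
      rw [filter_cons_of_neg _ (by norm_num)]
      have := aux_odd_map_add4 q.parts
      unfold oddCount at this
      rw [this]
      unfold oddCount at ho
      exact ho
    · -- gapCond
      have hnotmem : (2:ℕ) ∉ q.parts.map (· + 4) := by
        intro h
        have := hmem5 2 h; omega
      have hmapgap : gapCond (q.parts.map (· + 4)) := by
        refine ⟨?_, ?_, ?_⟩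
        · rw [← nodup_iff_count_le_one]
          exact Nodup.map (fun x y hxy => by omega) (nodup_iff_count_le_one.2 hgap.1)
        · rintro a ha b hb hab
          obtain ⟨a', ha', rfl⟩ := mem_map.1 ha
          obtain ⟨b', hb', rfl⟩ := mem_map.1 hb
          have := hgap.2.1 a' ha' b' hb' (by omega)
          omega
        · rintro a ha b hb hea heb hab
          obtain ⟨a', ha', rfl⟩ := mem_map.1 ha
          obtain ⟨b', hb', rfl⟩ := mem_map.1 hb
          have hea' : Even a' := by rw [Nat.even_iff] at hea ⊢; omega
          have heb' : Even b' := by rw [Nat.even_iff] at heb ⊢; omega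
          have := hgap.2.2 a' ha' b' hb' hea' heb' (by omega)
          omega
      refine ⟨?_, ?_, ?_⟩
      · intro a
        rw [count_cons]
        rcases eq_or_ne a 2 with rfl | hne
        · rw [count_eq_zero_of_notMem hnotmem]
          simp
        · simp [hne, hmapgap.1 a]
      · rintro a ha b hb hab
        rcases mem_cons.1 ha with rfl | ha
        · rcases mem_cons.1 hb with rfl | hb
          · omega
          · have := hmem5 b hb; omega
        · rcases mem_cons.1 hb with rfl | hb
          · have := hmem5 a ha; omega
          · exact hmapgap.2.1 a ha b hb hab
      · rintro a ha b hb hea heb hab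
        rcases mem_cons.1 ha with rfl | ha
        · rcases mem_cons.1 hb with rfl | hb
          · omega
          · have := hmem5 b hb; have := (hmem5 b hb).2 heb; omega
        · rcases mem_cons.1 hb with rfl | hb
          · have := hmem5 a ha; omega
          · exact hmapgap.2.2 a ha b hb hea heb hab
    · intro a ha hoa
      rcases mem_cons.1 ha with rfl | ha
      · exact absurd hoa (by norm_num)
      · have := hmem5 a ha; omega
  choose F hF hFprop using Fall
  choose G hG hGprop using Gall
  refine ⟨{
    toFun := fun p => ⟨F p, hFprop p⟩
    invFun := fun q => ⟨G q, hGprop q⟩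
    left_inv := ?_
    right_inv := ?_ }, fun p => hF p⟩
  · rintro ⟨p, hp⟩
    apply Subtype.ext
    apply Nat.Partition.ext
    rw [hG, hF]
    have h2 : (2:ℕ) ∈ p.parts := hp.2.2.2.2
    have key := aux_erase_ge p.parts hp.2.2.1 hp.2.2.2.1 h2
    rw [Multiset.map_map]
    have : (p.parts.erase 2).map ((· + 4) ∘ (· - 4)) = (p.parts.erase 2).map id := by
      refine Multiset.map_congr rfl (fun x hx => ?_)
      have := key x hx
      simp only [Function.comp, id]
      omega
    rw [this, Multiset.map_id, cons_erase h2]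
  · rintro ⟨q, hq⟩
    apply Subtype.ext
    apply Nat.Partition.ext
    rw [hF, hG]
    rw [erase_cons_head, Multiset.map_map]
    have : q.parts.map ((· - 4) ∘ (· + 4)) = q.parts.map id := by
      refine Multiset.map_congr rfl (fun x hx => ?_)
      simp only [Function.comp, id]
      omega
    rw [this, Multiset.map_id]
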